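/- In the discrete Stokes setting, if Γ is a subcomplex of the dual complex with χ(Γ) = 0 (e.g., Γ deformation-retracts to a core circle of an annulus region), and all the dual-edge weights θ_{ι(ε)} for ε ∈ ΔΓ are ≤ 0, then Σ_{e ∈ ∂Γ} α(e*) ≤ 0; hence if α is nonnegative and not identically zero on ∂Γ, this is a contradiction. -/

import Mathlib

open Finset Real

/-- A combinatorial triangulation `O = (V, E, F)` of the torus with `m`
triangles. `Cor` is the set of the `3m` corners of triangles; `tri j` is the
triangle containing the corner `j`, `vert j` its vertex, `opp j` the edge of
its triangle opposite to it; `nxt` is the counterclockwise next corner inside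
each triangle (a fixed-point free rotation of order 3 on each fiber of `tri`);
`sgm j` is the other corner opposite to the same edge `opp j`, in the triangle
adjacent across that edge.  The cardinality axioms encode `|F| = m`,
`2|E| = 3m`, `2|V| = m` (so `χ = V - E + F = 0`, as for the torus), and the
last axiom says that the two endpoints of an edge (namely the vertices of the
two other corners of an adjacent triangle) do not depend, as an unordered
pair, on the side from which they are computed. -/
structure TorusTriangulation (Cor F E V : Type*)
    [Fintype Cor] [DecidableEq Cor] [Fintype F] [DecidableEq F]
    [Fintype E] [DecidableEq E] [Fintype V] [DecidableEq V] where
  m : ℕ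
  hm : 0 < m
  tri : Cor → F
  vert : Cor → V
  opp : Cor → E
  nxt : Cor → Cor
  sgm : Cor → Cor
  card_cor : Fintype.card Cor = 3 * m
  card_faces : Fintype.card F = m
  card_edges : 2 * Fintype.card E = 3 * m
  card_verts : 2 * Fintype.card V = m
  tri_nxt : ∀ j, tri (nxt j) = tri j
  nxt_nxt_nxt : ∀ j, nxt (nxt (nxt j)) = j
  nxt_ne : ∀ j, nxt j ≠ j
  tri_fiber : ∀ j k, tri j = tri k → k = j ∨ k = nxt j ∨ k = nxt (nxt j)
  sgm_sgm : ∀ j, sgm (sgm j) = j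
  sgm_ne : ∀ j, sgm j ≠ j
  opp_sgm : ∀ j, opp (sgm j) = opp j
  opp_fiber : ∀ j k, opp j = opp k → k = j ∨ k = sgm j
  opp_surj : Function.Surjective opp
  endpoints_sgm : ∀ j, ({vert (nxt j), vert (nxt (nxt j))} : Multiset V) =
    {vert (nxt (sgm j)), vert (nxt (nxt (sgm j)))}

variable {Cor F E V : Type*}
    [Fintype Cor] [DecidableEq Cor] [Fintype F] [DecidableEq F]
    [Fintype E] [DecidableEq E] [Fintype V] [DecidableEq V]

namespace TorusTriangulation

variable (T : TorusTriangulation Cor F E V)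

lemma nxt_nxt_ne (j : Cor) : T.nxt (T.nxt j) ≠ j := by
  intro h
  have := congrArg T.nxt h
  rw [T.nxt_nxt_nxt] at this
  exact T.nxt_ne j this.symm

lemma nxt_inj : Function.Injective T.nxt :=
  Function.LeftInverse.injective (g := fun j => T.nxt (T.nxt j)) fun j => T.nxt_nxt_nxt j

lemma nxt_nxt_ne_nxt (j : Cor) : T.nxt (T.nxt j) ≠ T.nxt j := by
  intro h
  exact T.nxt_ne j (T.nxt_inj h)

lemma fiber_opp (j₀ : Cor) :
    Finset.univ.filter (fun j => T.opp j = T.opp j₀) = {j₀, T.sgm j₀} := by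
  ext k
  simp only [mem_filter, mem_univ, true_and, mem_insert, mem_singleton]
  constructor
  · intro h; exact T.opp_fiber j₀ k h.symm
  · rintro (rfl | rfl); · rfl
    · exact T.opp_sgm j₀

lemma fiber_tri (j₀ : Cor) :
    Finset.univ.filter (fun j => T.tri j = T.tri j₀) =
      {j₀, T.nxt j₀, T.nxt (T.nxt j₀)} := by
  ext k
  simp only [mem_filter, mem_univ, true_and, mem_insert, mem_singleton]
  constructor
  · intro h; exact T.tri_fiber j₀ k h.symm
  · rintro (rfl | rfl | rfl)
    · rfl
    · exact T.tri_nxt j₀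
    · rw [T.tri_nxt, T.tri_nxt]

lemma tri_surj : Function.Surjective T.tri := by
  intro f
  by_contra h
  push_neg at h
  have hfib : ∀ g : F, (Finset.univ.filter (fun j => T.tri j = g)).card ≤ 3 := by
    intro g
    rcases (Finset.univ.filter (fun j => T.tri j = g)).eq_empty_or_nonempty with he | ⟨j₀, hj₀⟩
    · simp [he]
    · have : T.tri j₀ = g := (mem_filter.mp hj₀).2
      subst this
      rw [T.fiber_tri j₀]
      exact (Finset.card_insert_le _ _).trans (by
        exact Nat.succ_le_succ ((Finset.card_insert_le _ _).trans (by simp)))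
  have hf0 : (Finset.univ.filter (fun j => T.tri j = f)).card = 0 := by
    rw [Finset.card_eq_zero, Finset.filter_eq_empty_iff]
    intro j _; exact h j
  have hcard := Finset.card_eq_sum_card_fiberwise
    (f := T.tri) (s := (Finset.univ : Finset Cor)) (t := Finset.univ)
    (fun x _ => mem_univ _)
  have h1 : (Finset.univ : Finset Cor).card = 3 * T.m := by
    simpa [Finset.card_univ] using T.card_cor
  have h2 : (Finset.univ : Finset F).card = T.m := by
    simpa [Finset.card_univ] using T.card_faces
  have hmemf : f ∈ (Finset.univ : Finset F) := mem_univ f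
  rw [← Finset.add_sum_erase _ _ hmemf, hf0, zero_add] at hcard
  have hle : ∑ g ∈ Finset.univ.erase f, (Finset.univ.filter (fun j => T.tri j = g)).card
      ≤ ∑ _g ∈ Finset.univ.erase f, 3 :=
    Finset.sum_le_sum (fun g _ => hfib g)
  rw [Finset.sum_const, smul_eq_mul, Finset.card_erase_of_mem hmemf, h2] at hle
  rw [h1] at hcard
  rw [hcard] at h1
  have hm := T.hm
  have hS : ∑ g ∈ Finset.univ.erase f, (Finset.univ.filter (fun j => T.tri j = g)).card
      = 3 * T.m := hcard.symm
  omega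

end TorusTriangulation

/-- In the discrete Stokes setting, if `Γ` is a subcomplex of the dual complex
with `χ(Γ) = 0` and all the dual-edge weights `θ_{ι(ε)}`, `ε ∈ ΔΓ`, are `≤ 0`,
then the boundary sum `Σ_{e ∈ ∂Γ} α(e*) ≤ 0` (below, each (edge, outside
side) pair is seen by the two corners opposite the edge, so the displayed sum
is twice the boundary sum); hence if `α` is nonnegative and some boundary term
is positive, we get a contradiction.  This is the key step excluding Reeb
components of the train track. -/
theorem discrete_stokes_no_reeb (T : TorusTriangulation Cor F E V)
    (θ : Cor → ℝ) (α : E → ℝ)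
    (hedge : ∀ j, θ j + θ (T.sgm j) = π - α (T.opp j))
    (htri : ∀ j, θ j + θ (T.nxt j) + θ (T.nxt (T.nxt j)) = π)
    (hvert : ∀ v : V,
      ∑ j ∈ Finset.univ.filter (fun j => T.vert j = v),
        (α (T.opp (T.nxt j)) + α (T.opp (T.nxt (T.nxt j)))) = 4 * π)
    (VG : Finset F) (EG : Finset E) (FG : Finset V)
    (hclosE : ∀ j, T.opp j ∈ EG → T.tri j ∈ VG)
    (hclosF : ∀ j, T.vert j ∈ FG →
      T.opp (T.nxt j) ∈ EG ∧ T.opp (T.nxt (T.nxt j)) ∈ EG)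
    (hχ : (VG.card : ℤ) - (EG.card : ℤ) + (FG.card : ℤ) = 0)
    (hΔ : ∀ j, T.tri j ∈ VG → T.opp j ∉ EG → θ j ≤ 0) :
    (∑ j ∈ Finset.univ.filter (fun j => T.opp j ∈ EG),
        ((if T.vert (T.nxt j) ∈ FG then 0 else α (T.opp j)) +
         (if T.vert (T.nxt (T.nxt j)) ∈ FG then 0 else α (T.opp j))) ≤ 0) ∧
    ((∀ e, 0 ≤ α e) →
      ¬ ∃ j, T.opp j ∈ EG ∧ T.vert (T.nxt j) ∉ FG ∧ 0 < α (T.opp j)) := by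
  classical
  set x : ℝ := ∑ e ∈ EG, α e with hx
  -- generic fiberwise sum over edges of EG
  have hEsum : ∀ (f : Cor → ℝ) (g : E → ℝ),
      (∀ j, T.opp j ∈ EG → f j + f (T.sgm j) = g (T.opp j)) →
      ∑ j ∈ Finset.univ.filter (fun j => T.opp j ∈ EG), f j = ∑ e ∈ EG, g e := by
    intro f g hfg
    rw [← Finset.sum_fiberwise_of_maps_to (g := T.opp) (t := EG)
      (fun j hj => (mem_filter.mp hj).2) f]
    refine Finset.sum_congr rfl (fun e he => ?_)
    obtain ⟨j₀, rfl⟩ := T.opp_surj e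
    have hfib : (Finset.univ.filter (fun j => T.opp j ∈ EG)).filter
        (fun j => T.opp j = T.opp j₀) = {j₀, T.sgm j₀} := by
      rw [Finset.filter_filter, ← T.fiber_opp j₀]
      refine Finset.filter_congr (fun j _ => ?_)
      exact ⟨fun h => h.2, fun h2 => ⟨h2 ▸ he, h2⟩⟩
    rw [hfib, Finset.sum_pair (Ne.symm (T.sgm_ne j₀))]
    exact hfg j₀ he
  have hB : ∑ j ∈ Finset.univ.filter (fun j => T.opp j ∈ EG), θ j
      = π * EG.card - x := by
    rw [hEsum θ (fun e => π - α e) (fun j _ => hedge j), Finset.sum_sub_distrib,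
      Finset.sum_const, nsmul_eq_mul, hx]
    ring
  have hB2 : ∑ j ∈ Finset.univ.filter (fun j => T.opp j ∈ EG), α (T.opp j)
      = 2 * x := by
    rw [hEsum (fun j => α (T.opp j)) (fun e => 2 * α e)
      (fun j _ => by rw [T.opp_sgm]; ring), ← Finset.mul_sum]
  -- triangle fiberwise sum
  have hA : ∑ j ∈ Finset.univ.filter (fun j => T.tri j ∈ VG), θ j
      = π * VG.card := by
    rw [← Finset.sum_fiberwise_of_maps_to (g := T.tri) (t := VG)
      (fun j hj => (mem_filter.mp hj).2) θ]
    have hinner : ∀ fc ∈ VG, ∑ j ∈ (Finset.univ.filter (fun j => T.tri j ∈ VG)).filter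
        (fun j => T.tri j = fc), θ j = π := by
      intro fc hfc
      obtain ⟨j₀, rfl⟩ := T.tri_surj fc
      have hfib : (Finset.univ.filter (fun j => T.tri j ∈ VG)).filter
          (fun j => T.tri j = T.tri j₀) = {j₀, T.nxt j₀, T.nxt (T.nxt j₀)} := by
        rw [Finset.filter_filter, ← T.fiber_tri j₀]
        refine Finset.filter_congr (fun j _ => ?_)
        exact ⟨fun h => h.2, fun h2 => ⟨h2 ▸ hfc, h2⟩⟩
      rw [hfib, Finset.sum_insert (by
          simp only [Finset.mem_insert, Finset.mem_singleton]
          push_neg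
          exact ⟨Ne.symm (T.nxt_ne j₀), Ne.symm (T.nxt_nxt_ne j₀)⟩),
        Finset.sum_pair (Ne.symm (T.nxt_nxt_ne_nxt j₀))]
      linarith [htri j₀]
    rw [Finset.sum_congr rfl hinner, Finset.sum_const, nsmul_eq_mul]
    ring
  -- split the triangle sum
  have hsub : (Finset.univ.filter (fun j => T.tri j ∈ VG)).filter
      (fun j => T.opp j ∈ EG) = Finset.univ.filter (fun j => T.opp j ∈ EG) := by
    ext j
    simp only [Finset.mem_filter, Finset.mem_univ, true_and]
    exact ⟨fun h => h.2, fun h => ⟨hclosE j h, h⟩⟩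
  have hneg : ∑ j ∈ (Finset.univ.filter (fun j => T.tri j ∈ VG)).filter
      (fun j => ¬ T.opp j ∈ EG), θ j ≤ 0 := by
    refine Finset.sum_nonpos (fun j hj => ?_)
    simp only [Finset.mem_filter, Finset.mem_univ, true_and] at hj
    exact hΔ j hj.1 hj.2
  have hsplit := Finset.sum_filter_add_sum_filter_not
    (Finset.univ.filter (fun j => T.tri j ∈ VG)) (fun j => T.opp j ∈ EG) θ
  rw [hsub, hA, hB] at hsplit
  -- Euler characteristic in ℝ
  have hχR : (VG.card : ℝ) - EG.card + FG.card = 0 := by exact_mod_cast hχ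
  have hxle : x ≤ π * FG.card := by
    have h5 : (EG.card : ℝ) - VG.card = FG.card := by linarith
    have h6 : π * (EG.card : ℝ) - π * VG.card = π * FG.card := by
      rw [← mul_sub, h5]
    linarith
  -- bijectivity of nxt and nxt²
  have hbij1 : Function.Bijective T.nxt :=
    ⟨T.nxt_inj, fun j => ⟨T.nxt (T.nxt j), T.nxt_nxt_nxt j⟩⟩
  have hbij2 : Function.Bijective (fun k => T.nxt (T.nxt k)) :=
    ⟨T.nxt_inj.comp T.nxt_inj, fun j => ⟨T.nxt j, T.nxt_nxt_nxt j⟩⟩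
  -- reindexed boundary-interior sums
  have hCA : (∑ k : Cor, if T.vert k ∈ FG then α (T.opp (T.nxt (T.nxt k))) else 0)
      = ∑ j : Cor, (if T.opp j ∈ EG then
          (if T.vert (T.nxt j) ∈ FG then α (T.opp j) else 0) else 0) := by
    refine Fintype.sum_bijective (fun k => T.nxt (T.nxt k)) hbij2 _ _ (fun k => ?_)
    by_cases hk : T.vert k ∈ FG
    · simp [hk, (hclosF k hk).2, T.nxt_nxt_nxt]
    · simp [hk, T.nxt_nxt_nxt]
  have hCB : (∑ k : Cor, if T.vert k ∈ FG then α (T.opp (T.nxt k)) else 0)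
      = ∑ j : Cor, (if T.opp j ∈ EG then
          (if T.vert (T.nxt (T.nxt j)) ∈ FG then α (T.opp j) else 0) else 0) := by
    refine Fintype.sum_bijective T.nxt hbij1 _ _ (fun k => ?_)
    by_cases hk : T.vert k ∈ FG
    · simp [hk, (hclosF k hk).1, T.nxt_nxt_nxt]
    · simp [hk, T.nxt_nxt_nxt]
  -- vertex sum over FG
  have hV : (∑ k : Cor, if T.vert k ∈ FG then
      (α (T.opp (T.nxt k)) + α (T.opp (T.nxt (T.nxt k)))) else 0)
      = 4 * π * FG.card := by
    rw [← Finset.sum_filter]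
    rw [← Finset.sum_fiberwise_of_maps_to (g := T.vert) (t := FG)
      (fun j hj => (mem_filter.mp hj).2)]
    have hinner : ∀ v ∈ FG, ∑ j ∈ (Finset.univ.filter (fun j => T.vert j ∈ FG)).filter
        (fun j => T.vert j = v),
        (α (T.opp (T.nxt j)) + α (T.opp (T.nxt (T.nxt j)))) = 4 * π := by
      intro v hv
      have hfib : (Finset.univ.filter (fun j => T.vert j ∈ FG)).filter
          (fun j => T.vert j = v) = Finset.univ.filter (fun j => T.vert j = v) := by
        ext j
        simp only [Finset.mem_filter, Finset.mem_univ, true_and]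
        exact ⟨fun h => h.2, fun h => ⟨h ▸ hv, h⟩⟩
      rw [hfib]
      exact hvert v
    rw [Finset.sum_congr rfl hinner, Finset.sum_const, nsmul_eq_mul]
    ring
  -- combine: interior contribution equals 4π|FG|
  have hCsum : ∑ j ∈ Finset.univ.filter (fun j => T.opp j ∈ EG),
      ((if T.vert (T.nxt j) ∈ FG then α (T.opp j) else 0) +
       (if T.vert (T.nxt (T.nxt j)) ∈ FG then α (T.opp j) else 0))
      = 4 * π * FG.card := by
    rw [Finset.sum_add_distrib, Finset.sum_filter, Finset.sum_filter,
      ← hCA, ← hCB, ← Finset.sum_add_distrib, ← hV]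
    refine Finset.sum_congr rfl (fun k _ => ?_)
    by_cases hk : T.vert k ∈ FG <;> simp [hk, add_comm]
  -- goal sum expressed via x
  have hGoal : ∑ j ∈ Finset.univ.filter (fun j => T.opp j ∈ EG),
      ((if T.vert (T.nxt j) ∈ FG then 0 else α (T.opp j)) +
       (if T.vert (T.nxt (T.nxt j)) ∈ FG then 0 else α (T.opp j)))
      = 4 * x - 4 * π * FG.card := by
    have hrw : ∀ j : Cor,
        ((if T.vert (T.nxt j) ∈ FG then (0:ℝ) else α (T.opp j)) +
         (if T.vert (T.nxt (T.nxt j)) ∈ FG then 0 else α (T.opp j)))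
        = 2 * α (T.opp j) -
          ((if T.vert (T.nxt j) ∈ FG then α (T.opp j) else 0) +
           (if T.vert (T.nxt (T.nxt j)) ∈ FG then α (T.opp j) else 0)) := by
      intro j
      by_cases h1 : T.vert (T.nxt j) ∈ FG <;>
        by_cases h2 : T.vert (T.nxt (T.nxt j)) ∈ FG <;> simp [h1, h2] <;> ring
    rw [Finset.sum_congr rfl (fun j _ => hrw j), Finset.sum_sub_distrib, hCsum,
      ← Finset.mul_sum, hB2]
    ring
  constructor
  · rw [hGoal]; linarith
  · rintro hα ⟨j, hjE, hjF, hjpos⟩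
    have hpos : 0 < ∑ j ∈ Finset.univ.filter (fun j => T.opp j ∈ EG),
        ((if T.vert (T.nxt j) ∈ FG then 0 else α (T.opp j)) +
         (if T.vert (T.nxt (T.nxt j)) ∈ FG then 0 else α (T.opp j))) := by
      refine Finset.sum_pos' (fun k _ => ?_) ⟨j, Finset.mem_filter.mpr ⟨Finset.mem_univ j, hjE⟩, ?_⟩
      · have h1 : (0:ℝ) ≤ if T.vert (T.nxt k) ∈ FG then 0 else α (T.opp k) := by
          split <;> (first | exact le_rfl | exact hα _)
        have h2 : (0:ℝ) ≤ if T.vert (T.nxt (T.nxt k)) ∈ FG then 0 else α (T.opp k) := by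
          split <;> (first | exact le_rfl | exact hα _)
        linarith
      · have h2 : (0:ℝ) ≤ if T.vert (T.nxt (T.nxt j)) ∈ FG then 0 else α (T.opp j) := by
          split <;> (first | exact le_rfl | exact hα _)
        rw [if_neg hjF]
        linarith
    rw [hGoal] at hpos
    linarith
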